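/- Let X be a Banach C(K)-module and x ∈ X such that the dual Banach lattice X(x)' of the cyclic subspace X(x) has no atoms for every x ∈ X. Then K has no isolated points, and moreover the hyperstonean space Q with C(Q) = Z(X') has no isolated points: if q were an isolated point of Q, the functional z ∈ X' supported at {q}, restricted to a suitable cyclic subspace X(x), would be an atom of X(x)'. -/

import Mathlib

noncomputable section

variable {K : Type*} [TopologicalSpace K] [CompactSpace K] [T2Space K]
variable {X : Type*} [NormedAddCommGroup X] [NormedSpace ℂ X] [CompleteSpace X]

/-- `u` is a positive functional on the cyclic subspace `X(x)` of the Banach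
C(K)-module `X`: it is nonnegative real on the positive cone `{fx : f ≥ 0}`. -/
def PosOn (m : C(K, ℂ) →ₐ[ℂ] (X →L[ℂ] X)) (x : X) (u : X →L[ℂ] ℂ) : Prop :=
  ∀ f : C(K, ℂ), (∀ k : K, 0 ≤ (f k).re ∧ (f k).im = 0) →
    0 ≤ (u (m f x)).re ∧ (u (m f x)).im = 0

/-- `u` is an atom of the dual Banach lattice `X(x)'`: `u` is positive and nonzero on
`X(x)`, and every positive functional `v` with `v ≤ u` on `X(x)` is a real multiple
of `u` there. -/
def IsAtomOn (m : C(K, ℂ) →ₐ[ℂ] (X →L[ℂ] X)) (x : X) (u : X →L[ℂ] ℂ) : Prop :=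
  PosOn m x u ∧ (∃ f : C(K, ℂ), u (m f x) ≠ 0) ∧
    ∀ v : X →L[ℂ] ℂ, PosOn m x v → PosOn m x (u - v) →
      ∃ a : ℝ, ∀ f : C(K, ℂ), v (m f x) = (a : ℂ) * u (m f x)

open scoped Classical in
lemma cont_single {A : Type*} [TopologicalSpace A] [T2Space A] (p : A)
    (hp : IsOpen ({p} : Set A)) :
    Continuous fun a => if a = p then (1:ℂ) else 0 := by
  have hclopen : IsClopen ({p} : Set A) := ⟨isClosed_singleton, hp⟩
  apply continuous_if _ continuous_const.continuousOn continuous_const.continuousOn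
  intro a ha
  rw [show {a : A | a = p} = ({p} : Set A) from rfl, hclopen.frontier_eq] at ha
  exact absurd ha (Set.notMem_empty a)

lemma char_spec {K : Type*} [TopologicalSpace K] (τ : C(K,ℂ) → ℂ)
    (hadd : ∀ f g, τ (f + g) = τ f + τ g)
    (hsmul : ∀ (c : ℂ) f, τ (c • f) = c * τ f)
    (hmul : ∀ f g, τ (f * g) = τ f * τ g)
    (h1 : τ 1 = 1) (f : C(K,ℂ)) : ∃ k, f k = τ f := by
  by_contra h
  push_neg at h
  set g : C(K,ℂ) := f + (-τ f) • 1 with hg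
  have hgk : ∀ k, g k ≠ 0 := by
    intro k
    have : g k = f k - τ f := by simp [hg]; ring
    rw [this]
    exact sub_ne_zero.mpr (h k)
  have hginv : Continuous fun k => (g k)⁻¹ :=
    Continuous.inv₀ (map_continuous g) hgk
  set ginv : C(K,ℂ) := ⟨fun k => (g k)⁻¹, hginv⟩ with hgi
  have hprod : g * ginv = 1 := by
    ext k
    exact mul_inv_cancel₀ (hgk k)
  have hτg : τ g = 0 := by
    rw [hg, hadd, hsmul, h1]
    ring
  have : (1:ℂ) = 0 := by
    rw [← h1, ← hprod, hmul, hτg, zero_mul]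
  exact one_ne_zero this

lemma dominated {K : Type*} [TopologicalSpace K] (τ μ : C(K,ℂ) → ℂ)
    (hτadd : ∀ f g, τ (f + g) = τ f + τ g)
    (hτsmul : ∀ (c : ℂ) f, τ (c • f) = c * τ f)
    (hτmul : ∀ f g, τ (f * g) = τ f * τ g)
    (hτ1 : τ 1 = 1)
    (hμadd : ∀ f g, μ (f + g) = μ f + μ g)
    (hμsmul : ∀ (c : ℂ) f, μ (c • f) = c * μ f)
    (hμpos : ∀ f : C(K,ℂ), (∀ k, 0 ≤ (f k).re ∧ (f k).im = 0) →
      0 ≤ (μ f).re ∧ (μ f).im = 0)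
    (hdom : ∀ f : C(K,ℂ), (∀ k, 0 ≤ (f k).re ∧ (f k).im = 0) →
      0 ≤ (τ f - μ f).re ∧ (τ f - μ f).im = 0)
    (f : C(K,ℂ)) : μ f = μ 1 * τ f := by
  have spec := char_spec τ hτadd hτsmul hτmul hτ1
  have hτ0 : τ 0 = 0 := by
    have h00 : τ 0 + τ 0 = τ 0 := by rw [← hτadd]; simp
    linear_combination h00
  -- τ is nonneg on nonneg functions
  have hτpos : ∀ f : C(K,ℂ), (∀ k, 0 ≤ (f k).re ∧ (f k).im = 0) →
      0 ≤ (τ f).re ∧ (τ f).im = 0 := by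
    intro f hf
    obtain ⟨k, hk⟩ := spec f
    rw [← hk]; exact hf k
  -- step 0 : nonneg f with τ f = 0 has μ f = 0
  have step0 : ∀ f : C(K,ℂ), (∀ k, 0 ≤ (f k).re ∧ (f k).im = 0) → τ f = 0 → μ f = 0 := by
    intro f hf hτf
    have h1 := hμpos f hf
    have h2 := hdom f hf
    rw [hτf] at h2
    apply Complex.ext
    · simp only [Complex.zero_re]
      have : (0 - μ f).re = -(μ f).re := by simp
      rw [this] at h2
      linarith [h1.1, h2.1]
    · simp [h1.2]
  -- real case
  have realcase : ∀ f : C(K,ℂ), (∀ k, (f k).im = 0) → μ f = μ 1 * τ f := by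
    intro f hf
    obtain ⟨k₀, hk₀⟩ := spec f
    have hτfim : (τ f).im = 0 := by rw [← hk₀]; exact hf k₀
    set g : C(K,ℂ) := f + (-τ f) • 1 with hg
    have hgval : ∀ k, g k = f k - τ f := by intro k; simp [hg]; ring
    have hgim : ∀ k, (g k).im = 0 := by
      intro k; rw [hgval k]; simp [hf k, hτfim]
    have hτg : τ g = 0 := by rw [hg, hτadd, hτsmul, hτ1]; ring
    -- positive and negative parts
    set gp : C(K,ℂ) := ⟨fun k => ((max (g k).re 0 : ℝ) : ℂ),
      Complex.continuous_ofReal.comp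
        ((Complex.continuous_re.comp (map_continuous g)).max continuous_const)⟩ with hgp
    set gm : C(K,ℂ) := ⟨fun k => ((max (-(g k).re) 0 : ℝ) : ℂ),
      Complex.continuous_ofReal.comp
        (((Complex.continuous_re.comp (map_continuous g)).neg).max continuous_const)⟩ with hgm
    have hgppos : ∀ k, 0 ≤ (gp k).re ∧ (gp k).im = 0 := by
      intro k; constructor
      · simp [hgp, le_max_right]
      · simp [hgp]
    have hgmpos : ∀ k, 0 ≤ (gm k).re ∧ (gm k).im = 0 := by
      intro k; constructor
      · simp [hgm, le_max_right]
      · simp [hgm]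
    have hsum : gp = g + gm := by
      ext k
      apply Complex.ext
      · simp only [hgp, hgm, ContinuousMap.coe_mk, ContinuousMap.add_apply,
          Complex.add_re, Complex.ofReal_re]
        linarith [max_zero_sub_max_neg_zero_eq_self ((g k).re)]
      · simp [hgp, hgm, hgim k]
    have hprod : gp * gm = 0 := by
      ext k
      simp only [ContinuousMap.mul_apply, ContinuousMap.zero_apply, hgp, hgm,
        ContinuousMap.coe_mk]
      rw [← Complex.ofReal_mul]
      rcases le_total (g k).re 0 with h | h
      · rw [max_eq_right h]; simp
      · rw [max_eq_right (by linarith : -(g k).re ≤ 0)]; simp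
    have hτgp : τ gp = τ gm := by
      rw [hsum, hτadd, hτg, zero_add]
    have hτprod : τ gp * τ gm = 0 := by
      rw [← hτmul, hprod, hτ0]
    have hτgp0 : τ gp = 0 := by
      rw [← hτgp] at hτprod
      exact pow_eq_zero_iff (n := 2) (by norm_num) |>.mp (by rw [sq]; exact hτprod)
    have hτgm0 : τ gm = 0 := hτgp ▸ hτgp0
    have hμgp : μ gp = 0 := step0 gp hgppos hτgp0
    have hμgm : μ gm = 0 := step0 gm hgmpos hτgm0
    have hμg : μ g = 0 := by
      have : μ gp = μ g + μ gm := by rw [hsum, hμadd]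
      rw [hμgp, hμgm, add_zero] at this
      exact this.symm
    have hf' : f = g + (τ f) • 1 := by rw [hg]; ext k; simp
    have : μ f = μ g + τ f * μ 1 := by
      conv_lhs => rw [hf']
      rw [hμadd, hμsmul]
    rw [this, hμg, zero_add]; ring
  -- general case
  set fre : C(K,ℂ) := ⟨fun k => (((f k).re : ℝ) : ℂ),
    Complex.continuous_ofReal.comp (Complex.continuous_re.comp (map_continuous f))⟩ with hfre
  set fim : C(K,ℂ) := ⟨fun k => (((f k).im : ℝ) : ℂ),
    Complex.continuous_ofReal.comp (Complex.continuous_im.comp (map_continuous f))⟩ with hfim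
  have hdecomp : f = fre + Complex.I • fim := by
    ext k
    apply Complex.ext <;> simp [hfre, hfim]
  have him1 : ∀ k, (fre k).im = 0 := by intro k; simp [hfre]
  have him2 : ∀ k, (fim k).im = 0 := by intro k; simp [hfim]
  calc μ f = μ fre + Complex.I * μ fim := by rw [hdecomp, hμadd, hμsmul]
    _ = μ 1 * τ fre + Complex.I * (μ 1 * τ fim) := by
        rw [realcase fre him1, realcase fim him2]
    _ = μ 1 * (τ fre + Complex.I * τ fim) := by ring
    _ = μ 1 * τ f := by rw [← hτsmul, ← hτadd, ← hdecomp]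

open scoped Classical in
lemma part1 (m : C(K, ℂ) →ₐ[ℂ] (X →L[ℂ] X)) (hm : Isometry m)
    (hNoAtom : ∀ x : X, ¬ ∃ u : X →L[ℂ] ℂ, IsAtomOn m x u) :
    ∀ k : K, ¬ IsOpen ({k} : Set K) := by
  intro p hp
  set e : C(K,ℂ) := ⟨fun a => if a = p then 1 else 0, cont_single p hp⟩ with he
  have hep : e p = 1 := by simp [he]
  have hene : e ≠ 0 := by
    intro h
    have : e p = 0 := by rw [h]; rfl
    rw [hep] at this; exact one_ne_zero this
  have hmul : ∀ f : C(K,ℂ), f * e = f p • e := by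
    intro f
    ext k
    by_cases hk : k = p
    · subst hk; simp [he]
    · simp [he, hk]
  have hmene : m e ≠ 0 := fun h => hene (hm.injective (by rw [h, map_zero]))
  obtain ⟨x₀, hx₀⟩ : ∃ x₀ : X, m e x₀ ≠ 0 := by
    by_contra h
    push_neg at h
    exact hmene (ContinuousLinearMap.ext fun y => by rw [h y]; rfl)
  set x₁ : X := m e x₀ with hx₁
  have hmf : ∀ f : C(K,ℂ), m f x₁ = f p • x₁ := by
    intro f
    rw [hx₁, ← ContinuousLinearMap.mul_apply, ← map_mul, hmul, map_smul]
    rfl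
  obtain ⟨u, -, hu⟩ := exists_dual_vector ℂ x₁ (norm_ne_zero_iff.mpr hx₀)
  have hux₁ : u x₁ ≠ 0 := by
    rw [hu]
    simpa using norm_ne_zero_iff.mpr hx₀
  set x : X := (u x₁)⁻¹ • x₁ with hx
  have hux : u x = 1 := by
    rw [hx, map_smul]
    exact inv_mul_cancel₀ hux₁
  have hkey : ∀ f : C(K,ℂ), u (m f x) = f p := by
    intro f
    have : m f x = f p • x := by
      rw [hx, (m f).map_smul, hmf]
      exact smul_comm _ _ _
    rw [this, map_smul, hux, smul_eq_mul, mul_one]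
  apply hNoAtom x
  refine ⟨u, ?_, ⟨1, ?_⟩, ?_⟩
  · intro f hf
    rw [hkey f]
    exact hf p
  · rw [hkey 1]
    simp
  · intro v hv hv'
    have h1 := hv 1 (fun k => by norm_num)
    rw [map_one] at h1
    have hvx : v x = ((v x).re : ℂ) := by
      apply Complex.ext
      · simp
      · simpa using h1.2
    refine ⟨(v x).re, fun f => ?_⟩
    have : m f x = f p • x := by
      rw [hx, (m f).map_smul, hmf]
      exact smul_comm _ _ _
    have h2 : v (m f x) = f p * v x := by rw [this, map_smul, smul_eq_mul]
    rw [h2, hkey f, ← hvx]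
    ring

set_option synthInstance.maxHeartbeats 200000 in
open scoped Classical in
lemma part2 (m : C(K, ℂ) →ₐ[ℂ] (X →L[ℂ] X))
    {Q : Type*} [TopologicalSpace Q] [CompactSpace Q] [T2Space Q]
    (m' : C(Q, ℂ) →ₐ[ℂ] ((X →L[ℂ] ℂ) →L[ℂ] (X →L[ℂ] ℂ))) (hm' : Isometry m')
    (hcompat : ∀ f : C(K, ℂ), ∃ F : C(Q, ℂ),
        ∀ (u : X →L[ℂ] ℂ) (z : X), (m' F u) z = u (m f z))
    (hNoAtom : ∀ x : X, ¬ ∃ u : X →L[ℂ] ℂ, IsAtomOn m x u) :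
    ∀ q : Q, ¬ IsOpen ({q} : Set Q) := by
  intro p hp
  set e : C(Q,ℂ) := ⟨fun a => if a = p then 1 else 0, cont_single p hp⟩ with he
  have hep : e p = 1 := by simp [he]
  have hene : e ≠ 0 := by
    intro h
    have : e p = 0 := by rw [h]; rfl
    rw [hep] at this; exact one_ne_zero this
  have hmul : ∀ F : C(Q,ℂ), F * e = F p • e := by
    intro F
    ext k
    by_cases hk : k = p
    · subst hk; simp [he]
    · simp [he, hk]
  have hmene : m' e ≠ 0 := fun h => hene (hm'.injective (by rw [h, map_zero]))
  obtain ⟨u₀, hu₀⟩ : ∃ u₀ : X →L[ℂ] ℂ, m' e u₀ ≠ 0 := by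
    by_contra h
    push_neg at h
    exact hmene (ContinuousLinearMap.ext fun y => by rw [h y]; rfl)
  set z : X →L[ℂ] ℂ := m' e u₀ with hz
  obtain ⟨x₀, hx₀⟩ : ∃ x₀ : X, z x₀ ≠ 0 := by
    by_contra h
    push_neg at h
    exact hu₀ (ContinuousLinearMap.ext fun y => by rw [h y]; rfl)
  set τ : C(K,ℂ) → ℂ := fun f => (hcompat f).choose p with hτ
  have hkey : ∀ (f : C(K,ℂ)) (y : X), z (m f y) = τ f * z y := by
    intro f y
    have hF := (hcompat f).choose_spec
    set F : C(Q,ℂ) := (hcompat f).choose with hFdef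
    have h1 : z (m f y) = (m' F z) y := (hF z y).symm
    have h2 : m' F z = F p • z := by
      have hsm : m' (F p • e) = F p • m' e := map_smul m'.toLinearMap (F p) e
      rw [hz, ← ContinuousLinearMap.mul_apply, ← map_mul, hmul, hsm]
      rfl
    rw [h1, h2]
    rfl
  -- algebraic properties of τ
  have hzc : ∀ c w, z (c • w) = c * z w := fun c w => by rw [map_smul]; rfl
  have hτadd : ∀ f g, τ (f + g) = τ f + τ g := by
    intro f g
    have h1 : z (m (f + g) x₀) = (τ f + τ g) * z x₀ := by
      rw [map_add, ContinuousLinearMap.add_apply, map_add, hkey f x₀, hkey g x₀]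
      ring
    have h2 := hkey (f + g) x₀
    rw [h1] at h2
    exact (mul_right_cancel₀ hx₀ h2.symm)
  have hτsmul : ∀ (c : ℂ) f, τ (c • f) = c * τ f := by
    intro c f
    have h1 : z (m (c • f) x₀) = (c * τ f) * z x₀ := by
      rw [map_smul]
      have : (c • m f) x₀ = c • (m f x₀) := rfl
      rw [this, hzc, hkey f x₀]
      ring
    have h2 := hkey (c • f) x₀
    rw [h1] at h2
    exact (mul_right_cancel₀ hx₀ h2.symm)
  have hτmul : ∀ f g, τ (f * g) = τ f * τ g := by
    intro f g
    have h1 : z (m (f * g) x₀) = (τ f * τ g) * z x₀ := by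
      rw [map_mul, ContinuousLinearMap.mul_apply, hkey f, hkey g]
      ring
    have h2 := hkey (f * g) x₀
    rw [h1] at h2
    exact (mul_right_cancel₀ hx₀ h2.symm)
  have hτ1 : τ 1 = 1 := by
    have h2 := hkey 1 x₀
    rw [map_one] at h2
    have : z ((1 : X →L[ℂ] X) x₀) = z x₀ := rfl
    rw [this] at h2
    have : (1 : ℂ) * z x₀ = τ 1 * z x₀ := by rw [one_mul]; exact h2
    exact (mul_right_cancel₀ hx₀ this).symm
  set x : X := (z x₀)⁻¹ • x₀ with hx
  have hzx : ∀ f : C(K,ℂ), z (m f x) = τ f := by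
    intro f
    rw [hx, (m f).map_smul, hzc, hkey f x₀]
    field_simp
  apply hNoAtom x
  refine ⟨z, ?_, ⟨1, ?_⟩, ?_⟩
  · intro f hf
    rw [hzx f]
    obtain ⟨k, hk⟩ := char_spec τ hτadd hτsmul hτmul hτ1 f
    rw [← hk]
    exact hf k
  · rw [hzx 1, hτ1]
    exact one_ne_zero
  · intro v hv hv'
    set μ : C(K,ℂ) → ℂ := fun f => v (m f x) with hμ
    have hμadd : ∀ f g, μ (f + g) = μ f + μ g := by
      intro f g
      simp only [hμ, map_add, ContinuousLinearMap.add_apply, map_add]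
    have hμsmul : ∀ (c : ℂ) f, μ (c • f) = c * μ f := by
      intro c f
      simp only [hμ, map_smul, ContinuousLinearMap.smul_apply, smul_eq_mul]
    have hdom : ∀ f : C(K,ℂ), (∀ k, 0 ≤ (f k).re ∧ (f k).im = 0) →
        0 ≤ (τ f - μ f).re ∧ (τ f - μ f).im = 0 := by
      intro f hf
      have := hv' f hf
      rw [ContinuousLinearMap.sub_apply, hzx f] at this
      exact this
    have hall := dominated τ μ hτadd hτsmul hτmul hτ1 hμadd hμsmul hv hdom
    have h1 := hv 1 (fun k => by norm_num)
    have hμ1 : μ 1 = ((μ 1).re : ℂ) := by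
      apply Complex.ext
      · simp
      · have : (μ 1).im = 0 := h1.2
        simp [this]
    refine ⟨(μ 1).re, fun f => ?_⟩
    have : v (m f x) = μ f := rfl
    rw [this, hall f, hzx f, ← hμ1]

/-- If the dual of every cyclic subspace of a Kaplansky C(K)-module X has no atoms,
then K has no isolated points, and the hyperstonean compact Q with C(Q) = Z(X')
has no isolated points. -/
theorem stmt18
    (m : C(K, ℂ) →ₐ[ℂ] (X →L[ℂ] X)) (hm : Isometry m)
    (hKap : ∀ x : X, ∃ U : Set K, IsClopen U ∧
        ∀ f : C(K, ℂ), (m f x = 0 ↔ ∀ k ∈ U, f k = 0))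
    {Q : Type*} [TopologicalSpace Q] [CompactSpace Q] [T2Space Q]
    [ExtremallyDisconnected Q]
    (m' : C(Q, ℂ) →ₐ[ℂ] ((X →L[ℂ] ℂ) →L[ℂ] (X →L[ℂ] ℂ))) (hm' : Isometry m')
    (hcompat : ∀ f : C(K, ℂ), ∃ F : C(Q, ℂ),
        ∀ (u : X →L[ℂ] ℂ) (z : X), (m' F u) z = u (m f z))
    (hKap' : ∀ u : X →L[ℂ] ℂ, ∃ U : Set Q, IsClopen U ∧
        ∀ F : C(Q, ℂ), (m' F u = 0 ↔ ∀ q ∈ U, F q = 0))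
    (hNoAtom : ∀ x : X, ¬ ∃ u : X →L[ℂ] ℂ, IsAtomOn m x u) :
    (∀ k : K, ¬ IsOpen ({k} : Set K)) ∧ (∀ q : Q, ¬ IsOpen ({q} : Set Q)) :=
  ⟨part1 m hm hNoAtom, part2 m m' hm' hcompat hNoAtom⟩
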